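/- Let G = (⋃_k G_k) ∪ {1} ⊆ [0,1] with G_k as above, and suppose P(k) holds for infinitely many k. Then the point 1 is '1-proper' in G: every neighbourhood of 1 in G is intersected by infinitely many pairwise disjoint clopen subsets of G. -/

import Mathlib

open scoped Classical

/-- The interval `G_k`: `[1 − 2^{-k}, 1 − 2^{-k} + 2^{-(k+2)}]` if `P k` holds,
and `[1 − 2^{-k}, 1 − 2^{-(k+1)}]` otherwise. -/
noncomputable def Gk (P : ℕ → Prop) (k : ℕ) : Set ℝ :=
  if P k then
    Set.Icc (1 - (2:ℝ)⁻¹ ^ k) (1 - (2:ℝ)⁻¹ ^ k + (2:ℝ)⁻¹ ^ (k + 2))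
  else
    Set.Icc (1 - (2:ℝ)⁻¹ ^ k) (1 - (2:ℝ)⁻¹ ^ (k + 1))

/-- `G = (⋃ k, G_k) ∪ {1}`. -/
noncomputable def GSet (P : ℕ → Prop) : Set ℝ := (⋃ k, Gk P k) ∪ {1}

lemma half_pow_pos (k : ℕ) : (0:ℝ) < (2:ℝ)⁻¹ ^ k := by positivity

lemma Gk_sub (P : ℕ → Prop) (k : ℕ) :
    Gk P k ⊆ Set.Icc (1 - (2:ℝ)⁻¹ ^ k) (1 - (2:ℝ)⁻¹ ^ (k+1)) := by
  unfold Gk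
  split
  · apply Set.Icc_subset_Icc_right
    have h2 : (2:ℝ)⁻¹ ^ (k+2) = (2:ℝ)⁻¹ ^ k * (1/4) := by rw [pow_add]; norm_num
    have h1 : (2:ℝ)⁻¹ ^ (k+1) = (2:ℝ)⁻¹ ^ k * (1/2) := by rw [pow_add]; norm_num
    nlinarith [half_pow_pos k]
  · exact le_refl _

lemma left_mem (P : ℕ → Prop) (k : ℕ) : (1 - (2:ℝ)⁻¹ ^ k) ∈ GSet P := by
  left
  refine Set.mem_iUnion.2 ⟨k, ?_⟩
  unfold Gk
  split
  · exact ⟨le_refl _, by nlinarith [half_pow_pos (k+2)]⟩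
  · refine ⟨le_refl _, ?_⟩
    have : (2:ℝ)⁻¹ ^ (k+1) ≤ (2:ℝ)⁻¹ ^ k :=
      pow_le_pow_of_le_one (by norm_num) (by norm_num) (by omega)
    linarith

noncomputable def gfun (k : ℕ) : ℝ := 1 - (5/2) * (2:ℝ)⁻¹ ^ (k + 2)

lemma gfun_lt_one (k : ℕ) : gfun k < 1 := by
  unfold gfun; nlinarith [half_pow_pos (k+2)]

lemma gfun_bounds (k : ℕ) :
    1 - (2:ℝ)⁻¹ ^ k < gfun k ∧ gfun k < 1 - (2:ℝ)⁻¹ ^ (k+1) := by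
  unfold gfun
  have h2 : (2:ℝ)⁻¹ ^ (k+2) = (2:ℝ)⁻¹ ^ k * (1/4) := by
    rw [pow_add]; norm_num
  have h1 : (2:ℝ)⁻¹ ^ (k+1) = (2:ℝ)⁻¹ ^ k * (1/2) := by
    rw [pow_add]; norm_num
  constructor <;> nlinarith [half_pow_pos k]

lemma gfun_strictMono : StrictMono gfun := by
  intro a b hab
  unfold gfun
  have : (2:ℝ)⁻¹ ^ (b+2) < (2:ℝ)⁻¹ ^ (a+2) :=
    pow_lt_pow_right_of_lt_one₀ (by norm_num) (by norm_num) (by omega)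
  linarith

lemma gfun_not_mem (P : ℕ → Prop) {k : ℕ} (hk : P k) : gfun k ∉ GSet P := by
  rintro (h | h)
  · obtain ⟨j, hj⟩ := Set.mem_iUnion.1 h
    obtain ⟨hl, hr⟩ := Gk_sub P j hj
    obtain ⟨hgl, hgr⟩ := gfun_bounds k
    have hjk : j = k := by
      have h1 : (2:ℝ)⁻¹ ^ (j+1) < (2:ℝ)⁻¹ ^ k := by linarith
      have h2 : (2:ℝ)⁻¹ ^ (k+1) < (2:ℝ)⁻¹ ^ j := by linarith
      have := (pow_lt_pow_iff_right_of_lt_one₀ (a := (2:ℝ)⁻¹) (by norm_num) (by norm_num)).1 h1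
      have := (pow_lt_pow_iff_right_of_lt_one₀ (a := (2:ℝ)⁻¹) (by norm_num) (by norm_num)).1 h2
      omega
    subst hjk
    unfold Gk at hj
    rw [if_pos hk] at hj
    obtain ⟨_, hr'⟩ := hj
    unfold gfun at hr'
    have h2 : (2:ℝ)⁻¹ ^ (j+2) = (2:ℝ)⁻¹ ^ j * (1/4) := by rw [pow_add]; norm_num
    nlinarith [half_pow_pos j]
  · exact absurd (Set.mem_singleton_iff.1 h) (ne_of_lt (gfun_lt_one k))


theorem stmt_14 (P : ℕ → Prop) (hP : {k : ℕ | P k}.Infinite)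
    (h1 : (1 : ℝ) ∈ GSet P) :
    ∀ U ∈ nhds (⟨1, h1⟩ : ↥(GSet P)), ∃ C : ℕ → Set ↥(GSet P),
      (∀ i, IsClopen (C i)) ∧ Pairwise (Function.onFun Disjoint C) ∧
      ∀ i, (C i ∩ U).Nonempty := by
  intro U hU
  obtain ⟨t, ht, hts⟩ := (mem_nhds_subtype (GSet P) _ U).1 hU
  obtain ⟨ε, hε, hball⟩ := Metric.mem_nhds_iff.1 ht
  obtain ⟨N, hN⟩ := exists_pow_lt_of_lt_one hε (show (2:ℝ)⁻¹ < 1 by norm_num)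
  -- infinitely many P-indices ≥ N
  have hQ : {k : ℕ | P k ∧ N ≤ k}.Infinite := by
    have : {k : ℕ | P k} \ Set.Iio N ⊆ {k : ℕ | P k ∧ N ≤ k} := by
      intro k hk
      exact ⟨hk.1, not_lt.1 hk.2⟩
    exact ((hP.diff (Set.finite_Iio N)).mono this)
  set f : ℕ → ℕ := Nat.nth (fun k => P k ∧ N ≤ k) with hf
  have hmono : StrictMono f := Nat.nth_strictMono hQ
  have hfP : ∀ i, P (f i) := fun i => (Nat.nth_mem_of_infinite hQ i).1
  have hfN : ∀ i, N ≤ f i := fun i => (Nat.nth_mem_of_infinite hQ i).2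
  refine ⟨fun i => Subtype.val ⁻¹' Set.Ioo (gfun (f i)) (gfun (f (i+1))), ?_, ?_, ?_⟩
  · intro i
    constructor
    · have hEq : Subtype.val ⁻¹' Set.Ioo (gfun (f i)) (gfun (f (i+1)))
          = (Subtype.val ⁻¹' Set.Icc (gfun (f i)) (gfun (f (i+1))) : Set ↥(GSet P)) := by
        ext x
        simp only [Set.mem_preimage, Set.mem_Ioo, Set.mem_Icc]
        constructor
        · rintro ⟨h1', h2'⟩; exact ⟨le_of_lt h1', le_of_lt h2'⟩
        · rintro ⟨h1', h2'⟩
          refine ⟨lt_of_le_of_ne h1' ?_, lt_of_le_of_ne h2' ?_⟩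
          · intro h; exact gfun_not_mem P (hfP i) (h ▸ x.2)
          · intro h; exact gfun_not_mem P (hfP (i+1)) (h ▸ x.2)
      show IsClosed (Subtype.val ⁻¹' Set.Ioo (gfun (f i)) (gfun (f (i+1))) : Set ↥(GSet P))
      rw [hEq]
      exact isClosed_Icc.preimage continuous_subtype_val
    · exact isOpen_Ioo.preimage continuous_subtype_val
  · have key : ∀ i j : ℕ, i < j →
        Disjoint (Subtype.val ⁻¹' Set.Ioo (gfun (f i)) (gfun (f (i+1))) : Set ↥(GSet P))
          (Subtype.val ⁻¹' Set.Ioo (gfun (f j)) (gfun (f (j+1)))) := by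
      intro i j hij
      rw [Set.disjoint_left]
      rintro x ⟨_, hx2⟩ ⟨hx3, _⟩
      have : gfun (f (i+1)) ≤ gfun (f j) :=
        (gfun_strictMono.monotone (hmono.monotone hij))
      linarith
    intro i j hij
    rcases hij.lt_or_gt with h | h
    · exact key i j h
    · exact (key j i h).symm
  · intro i
    refine ⟨⟨1 - (2:ℝ)⁻¹ ^ (f (i+1)), left_mem P (f (i+1))⟩, ?_, ?_⟩
    · simp only [Set.mem_preimage, Set.mem_Ioo]
      constructor
      · have h1' : gfun (f i) < 1 - (2:ℝ)⁻¹ ^ (f i + 1) := (gfun_bounds (f i)).2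
        have h2' : (2:ℝ)⁻¹ ^ (f (i+1)) ≤ (2:ℝ)⁻¹ ^ (f i + 1) :=
          pow_le_pow_of_le_one (by norm_num) (by norm_num) (hmono (Nat.lt_succ_self i))
        linarith
      · exact (gfun_bounds (f (i+1))).1
    · apply hts
      simp only [Set.mem_preimage]
      apply hball
      simp only [Metric.mem_ball, Real.dist_eq]
      have h2' : (2:ℝ)⁻¹ ^ (f (i+1)) ≤ (2:ℝ)⁻¹ ^ N :=
        pow_le_pow_of_le_one (by norm_num) (by norm_num) (hfN (i+1))
      rw [abs_sub_lt_iff]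
      constructor <;> [skip; linarith [half_pow_pos (f (i+1))]]
      linarith [half_pow_pos (f (i+1))]
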